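/- For every N ∈ ℕ, the control operator W^N maps the subspace F^N_0 = {f ∈ ℝ^N : f_0 = 0} bijectively onto the subspace {h ∈ ℝ^N : h_N = 0}. -/

import Mathlib

/-- Solution `u^f` of the semi-infinite dynamical system. -/
def solS (a b f : ℕ → ℝ) : ℕ → ℕ → ℝ
  | n, 0 => if n = 0 then f 0 else 0
  | n, 1 =>
      if n = 0 then f 1
      else a n * solS a b f (n + 1) 0 + a (n - 1) * solS a b f (n - 1) 0
        + b n * solS a b f n 0
  | n, t + 2 =>
      if n = 0 then f (t + 2)
      else a n * solS a b f (n + 1) (t + 1) + a (n - 1) * solS a b f (n - 1) (t + 1)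
        + b n * solS a b f n (t + 1) - solS a b f n t
  termination_by n t => t

/-- Extension of a finite control by zero. -/
def ctrl (T : ℕ) (f : Fin T → ℝ) : ℕ → ℝ := fun t => if h : t < T then f ⟨t, h⟩ else 0

lemma solS_t0 (a b f : ℕ → ℝ) (n : ℕ) : solS a b f n 0 = if n = 0 then f 0 else 0 := by
  rw [solS]

lemma solS_t1 (a b f : ℕ → ℝ) (n : ℕ) : solS a b f n 1 =
    if n = 0 then f 1
    else a n * solS a b f (n + 1) 0 + a (n - 1) * solS a b f (n - 1) 0
      + b n * solS a b f n 0 := by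
  conv_lhs => rw [solS]

lemma solS_t2 (a b f : ℕ → ℝ) (n t : ℕ) : solS a b f n (t + 2) =
    if n = 0 then f (t + 2)
    else a n * solS a b f (n + 1) (t + 1) + a (n - 1) * solS a b f (n - 1) (t + 1)
      + b n * solS a b f n (t + 1) - solS a b f n t := by
  rw [solS]

lemma solS_bdry (a b f : ℕ → ℝ) (t : ℕ) : solS a b f 0 t = f t := by
  rcases t with _ | (_ | t)
  · rw [solS_t0]; simp
  · rw [solS_t1]; simp
  · rw [solS_t2]; simp

lemma solS_congr (a b : ℕ → ℝ) :
    ∀ T n (f g : ℕ → ℝ), (∀ t, t + n ≤ T → f t = g t) → solS a b f n T = solS a b g n T := by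
  intro T
  induction T using Nat.strong_induction_on with
  | _ T ih =>
    rcases T with _ | (_ | T)
    · intro n f g h
      rcases n with _ | n
      · rw [solS_t0, solS_t0]; simp [h 0 (by omega)]
      · rw [solS_t0, solS_t0]; simp
    · intro n f g h
      rcases n with _ | n
      · rw [solS_t1, solS_t1]; simp [h 1 (by omega)]
      · rw [solS_t1 a b f, solS_t1 a b g]
        simp only [Nat.succ_ne_zero, if_false]
        rcases n with _ | n
        · rw [solS_t0 a b f, solS_t0 a b g, solS_t0 a b f, solS_t0 a b g,
            solS_t0 a b f, solS_t0 a b g]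
          simp [h 0 (by omega)]
        · rw [solS_t0 a b f, solS_t0 a b g, solS_t0 a b f, solS_t0 a b g,
            solS_t0 a b f, solS_t0 a b g]
          simp
    · intro n f g h
      rcases n with _ | n
      · rw [solS_t2, solS_t2]; simp [h (T + 2) (by omega)]
      · rw [solS_t2 a b f, solS_t2 a b g]
        simp only [Nat.succ_ne_zero, if_false, Nat.add_sub_cancel]
        rw [ih (T + 1) (by omega) (n + 2) f g (fun t ht => h t (by omega)),
          ih (T + 1) (by omega) n f g (fun t ht => h t (by omega)),
          ih (T + 1) (by omega) (n + 1) f g (fun t ht => h t (by omega)),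
          ih T (by omega) (n + 1) f g (fun t ht => h t (by omega))]

lemma solS_null (a b : ℕ → ℝ) : ∀ t n, solS a b (fun _ => 0) n t = 0 := by
  intro t
  induction t using Nat.strong_induction_on with
  | _ t ih =>
    rcases t with _ | (_ | t)
    · intro n; rw [solS_t0]; simp
    · intro n; rw [solS_t1]
      rcases n with _ | n
      · simp
      · simp [solS_t0]
    · intro n; rw [solS_t2]
      rcases n with _ | n
      · simp
      · simp [ih (t + 1) (by omega), ih t (by omega)]

lemma solS_outside (a b f : ℕ → ℝ) {n T : ℕ} (h : T < n) : solS a b f n T = 0 := by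
  rw [solS_congr a b T n f (fun _ => 0) (fun t ht => absurd ht (by omega)), solS_null]

lemma solS_lead (a b : ℕ → ℝ) :
    ∀ T n s (f : ℕ → ℝ), n + s = T → (∀ t, t < s → f t = 0) →
      solS a b f n T = (∏ i ∈ Finset.range n, a i) * f s := by
  intro T
  induction T using Nat.strong_induction_on with
  | _ T ih =>
    intro n s f hns hf
    rcases n with _ | m
    · have hs : s = T := by omega
      subst hs
      rw [solS_bdry]; simp
    · rcases T with _ | (_ | T)
      · omega
      · have hm : m = 0 := by omega
        have hs : s = 0 := by omega
        subst hm; subst hs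
        rw [solS_t1]
        simp only [Nat.succ_ne_zero, if_false]
        rw [solS_t0, solS_t0, solS_t0]
        simp
      · rw [solS_t2]
        simp only [Nat.succ_ne_zero, if_false]
        have hA : solS a b f (m + 1 + 1) (T + 1) = 0 := by
          rcases Nat.lt_or_ge (T + 1) (m + 2) with h | h
          · exact solS_outside a b f h
          · rw [ih (T + 1) (by omega) (m + 2) (s - 2) f (by omega) (fun t ht => hf t (by omega))]
            rw [hf (s - 2) (by omega)]; ring
        have hC : solS a b f (m + 1) (T + 1) = 0 := by
          rcases Nat.lt_or_ge (T + 1) (m + 1) with h | h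
          · exact solS_outside a b f h
          · rw [ih (T + 1) (by omega) (m + 1) (s - 1) f (by omega) (fun t ht => hf t (by omega))]
            rw [hf (s - 1) (by omega)]; ring
        have hD : solS a b f (m + 1) T = 0 := by
          rcases Nat.lt_or_ge T (m + 1) with h | h
          · exact solS_outside a b f h
          · rw [ih T (by omega) (m + 1) (s - 2) f (by omega) (fun t ht => hf t (by omega))]
            rw [hf (s - 2) (by omega)]; ring
        have hB : solS a b f m (T + 1) =
            (∏ i ∈ Finset.range m, a i) * f s :=
          ih (T + 1) (by omega) m s f (by omega) hf
        simp only [Nat.add_sub_cancel]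
        rw [hA, hB, hC, hD, Finset.prod_range_succ]
        ring

lemma solS_add (a b f g : ℕ → ℝ) :
    ∀ t n, solS a b (fun s => f s + g s) n t = solS a b f n t + solS a b g n t := by
  intro t
  induction t using Nat.strong_induction_on with
  | _ t ih =>
    rcases t with _ | (_ | t)
    · intro n; rw [solS_t0, solS_t0, solS_t0]
      rcases n with _ | n <;> simp
    · intro n
      rw [solS_t1 a b (fun s => f s + g s), solS_t1 a b f, solS_t1 a b g]
      rcases n with _ | n
      · simp
      · simp only [Nat.succ_ne_zero, if_false]
        rw [ih 0 (by omega), ih 0 (by omega), ih 0 (by omega)]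
        ring
    · intro n
      rw [solS_t2 a b (fun s => f s + g s), solS_t2 a b f, solS_t2 a b g]
      rcases n with _ | n
      · simp
      · simp only [Nat.succ_ne_zero, if_false]
        rw [ih (t + 1) (by omega), ih (t + 1) (by omega), ih (t + 1) (by omega),
          ih t (by omega)]
        ring

lemma solS_smul (a b f : ℕ → ℝ) (c : ℝ) :
    ∀ t n, solS a b (fun s => c * f s) n t = c * solS a b f n t := by
  intro t
  induction t using Nat.strong_induction_on with
  | _ t ih =>
    rcases t with _ | (_ | t)
    · intro n; rw [solS_t0, solS_t0]
      rcases n with _ | n <;> simp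
    · intro n
      rw [solS_t1 a b (fun s => c * f s), solS_t1 a b f]
      rcases n with _ | n
      · simp
      · simp only [Nat.succ_ne_zero, if_false]
        rw [ih 0 (by omega), ih 0 (by omega), ih 0 (by omega)]
        ring
    · intro n
      rw [solS_t2 a b (fun s => c * f s), solS_t2 a b f]
      rcases n with _ | n
      · simp
      · simp only [Nat.succ_ne_zero, if_false]
        rw [ih (t + 1) (by omega), ih (t + 1) (by omega), ih (t + 1) (by omega),
          ih t (by omega)]
        ring

/-- the control operator `W^N` maps `F^N_0 = {f : f_0 = 0}` bijectively onto
`{h : h_N = 0}`. -/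
theorem control_operator_bijOn_zero_subspace
    (N : ℕ) (hN : 1 ≤ N) (a b : ℕ → ℝ) (ha0 : a 0 = 1) (hapos : ∀ n, 0 < a n) :
    Set.BijOn
      (fun f : Fin N → ℝ => fun n : Fin N => solS a b (ctrl N f) ((n : ℕ) + 1) N)
      {f : Fin N → ℝ | f ⟨0, by omega⟩ = 0}
      {h : Fin N → ℝ | h ⟨N - 1, by omega⟩ = 0} := by
  set W : (Fin N → ℝ) → (Fin N → ℝ) :=
    fun f => fun n : Fin N => solS a b (ctrl N f) ((n : ℕ) + 1) N with hW
  have hprodpos : ∀ n : ℕ, 0 < ∏ i ∈ Finset.range n, a i :=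
    fun n => Finset.prod_pos (fun i _ => hapos i)
  have key : ∀ (f : Fin N → ℝ) (t : ℕ) (ht : t < N),
      (∀ t' : ℕ, ∀ ht' : t' < t, f ⟨t', by omega⟩ = 0) →
      solS a b (ctrl N f) (N - t) N = (∏ i ∈ Finset.range (N - t), a i) * f ⟨t, ht⟩ := by
    intro f t ht h0
    have := solS_lead a b N (N - t) t (ctrl N f) (by omega)
      (fun t' ht' => by
        have h1 : t' < N := by omega
        simp only [ctrl, dif_pos h1]
        exact h0 t' ht')
    rw [this]
    congr 1
    simp [ctrl, ht]
  have hinj : Function.Injective W := by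
    have hker : ∀ f : Fin N → ℝ, W f = 0 → f = 0 := by
      intro f hf
      funext i
      obtain ⟨t, ht⟩ := i
      induction t using Nat.strong_induction_on with
      | _ t ihm =>
        have h0 : ∀ t' : ℕ, ∀ ht' : t' < t, f ⟨t', by omega⟩ = 0 := by
          intro t' ht'
          exact ihm t' ht' (by omega)
        have hk := key f t ht h0
        have hWc : solS a b (ctrl N f) (N - t) N = 0 := by
          have h1 : W f ⟨N - t - 1, by omega⟩ = 0 := by rw [hf]; rfl
          rw [hW] at h1
          simpa only [show N - t - 1 + 1 = N - t by omega] using h1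
        rw [hWc] at hk
        have := (mul_eq_zero.mp hk.symm).resolve_left (hprodpos (N - t)).ne'
        simpa using this
    intro f g hfg
    have hc : ctrl N (fun i : Fin N => f i - g i) =
        fun s => ctrl N f s + (-1 : ℝ) * ctrl N g s := by
      funext s
      simp only [ctrl]
      split <;> ring
    have hlin : W (fun i => f i - g i) = 0 := by
      funext n
      rw [hW]
      simp only [Pi.zero_apply]
      rw [hc, solS_add, solS_smul]
      have h2 : W f n = W g n := by rw [hfg]
      rw [hW] at h2
      simp only at h2
      rw [h2]
      ring
    have h3 := hker _ hlin
    funext i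
    have h := congrFun h3 i
    simpa [sub_eq_zero] using h
  have hWlin : ∀ (f g : Fin N → ℝ), W (fun i => f i + g i) = fun n => W f n + W g n := by
    intro f g
    funext n
    rw [hW]
    simp only
    have hc : ctrl N (fun i : Fin N => f i + g i) = fun s => ctrl N f s + ctrl N g s := by
      funext s
      simp only [ctrl]
      split <;> ring
    rw [hc, solS_add]
  have hWsmul : ∀ (c : ℝ) (f : Fin N → ℝ), W (fun i => c * f i) = fun n => c * W f n := by
    intro c f
    funext n
    rw [hW]
    simp only
    have hc : ctrl N (fun i : Fin N => c * f i) = fun s => c * ctrl N f s := by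
      funext s
      simp only [ctrl]
      split <;> ring
    rw [hc, solS_smul]
  set Wl : (Fin N → ℝ) →ₗ[ℝ] (Fin N → ℝ) :=
    { toFun := W
      map_add' := fun f g => hWlin f g
      map_smul' := fun c f => by exact hWsmul c f } with hWl
  have hsurj : Function.Surjective W := by
    have h4 : Function.Injective Wl := hinj
    exact (LinearMap.injective_iff_surjective).mp h4
  refine ⟨?_, hinj.injOn, ?_⟩
  · intro f hf
    simp only [Set.mem_setOf_eq] at hf ⊢
    show solS a b (ctrl N f) (N - 1 + 1) N = 0
    rw [show N - 1 + 1 = N by omega]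
    have hk := key f 0 (by omega) (fun t' ht' => absurd ht' (by omega))
    rw [show N - 0 = N by omega] at hk
    rw [hk, hf]
    ring
  · intro h hh
    simp only [Set.mem_setOf_eq] at hh
    obtain ⟨f, hf⟩ := hsurj h
    refine ⟨f, ?_, hf⟩
    simp only [Set.mem_setOf_eq]
    have hk := key f 0 (by omega) (fun t' ht' => absurd ht' (by omega))
    rw [show N - 0 = N by omega] at hk
    have hWc : solS a b (ctrl N f) N N = 0 := by
      have h1 : W f ⟨N - 1, by omega⟩ = 0 := by rw [hf]; exact hh
      rw [hW] at h1
      simpa only [show N - 1 + 1 = N by omega] using h1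
    rw [hWc] at hk
    exact (mul_eq_zero.mp hk.symm).resolve_left (hprodpos N).ne'
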